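/- Weak duality certificate for multi-affine objectives: let p : ℝ^n → ℝ be multi-affine, and suppose t ∈ ℝ, λ ∈ ℝ^{m_I} with λ_i ≥ 0 for all i ∈ I, and μ ∈ ℝ^{m_J} satisfy t ≤ p(v) + Σ_{i∈I} λ_i(a_i·v − b_i) + Σ_{j∈J} μ_j(c_j·v − d_j) for all v ∈ V. Then for every x ∈ R with a_i·x ≤ b_i for all i ∈ I and c_j·x = d_j for all j ∈ J, one has t ≤ p(x); in particular t is a lower bound on the optimal value p* of (P). -/

import Mathlib

/-- A function `p : ℝ^n → ℝ` is multi-affine if it is a polynomial of degree at most 1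
in each variable. -/
def MultiAffine {n : ℕ} (p : (Fin n → ℝ) → ℝ) : Prop :=
  ∃ c : (Fin n → Bool) → ℝ,
    ∀ x : Fin n → ℝ, p x = ∑ l : Fin n → Bool, c l * ∏ k, (if l k then x k else 1)

/-- Euclidean dot product on `ℝ^n`. -/
def dotp {n : ℕ} (u x : Fin n → ℝ) : ℝ := ∑ k, u k * x k

/-- Affine in each coordinate (convex-combination form). -/
def AffEach {n : ℕ} (q : (Fin n → ℝ) → ℝ) : Prop :=
  ∀ (x : Fin n → ℝ) (k : Fin n) (u v θ : ℝ),
    q (Function.update x k ((1-θ)*u + θ*v)) =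
      (1-θ) * q (Function.update x k u) + θ * q (Function.update x k v)

lemma multiAffine_affEach {n : ℕ} {p : (Fin n → ℝ) → ℝ} (hp : MultiAffine p) :
    AffEach p := by
  obtain ⟨c, hc⟩ := hp
  intro x k u v θ
  simp only [hc]
  rw [Finset.mul_sum, Finset.mul_sum, ← Finset.sum_add_distrib]
  refine Finset.sum_congr rfl fun l _ => ?_
  have key : ∀ s : ℝ, (∏ j, (if l j then Function.update x k s j else 1)) =
      (if l k then s else 1) * ∏ j ∈ {k}ᶜ, (if l j then x j else 1) := by
    intro s
    rw [Fintype.prod_eq_mul_prod_compl k]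
    simp only [Function.update_self]
    congr 1
    refine Finset.prod_congr rfl fun j hj => ?_
    have hjk : j ≠ k := by simpa using hj
    rw [Function.update_of_ne hjk]
  rw [key, key, key]
  by_cases h : l k <;> simp [h] <;> ring

lemma affEach_add {n : ℕ} {q r : (Fin n → ℝ) → ℝ} (hq : AffEach q) (hr : AffEach r) :
    AffEach (fun x => q x + r x) := by
  intro x k u v θ
  simp only
  rw [hq x k u v θ, hr x k u v θ]; ring

lemma affEach_sum {n : ℕ} {ι : Type*} (s : Finset ι) (f : ι → (Fin n → ℝ) → ℝ)
    (hf : ∀ i ∈ s, AffEach (f i)) : AffEach (fun x => ∑ i ∈ s, f i x) := by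
  intro x k u v θ
  simp only
  rw [Finset.mul_sum, Finset.mul_sum, ← Finset.sum_add_distrib]
  exact Finset.sum_congr rfl fun i hi => hf i hi x k u v θ

lemma affEach_lin {n : ℕ} (r e : ℝ) (w : Fin n → ℝ) :
    AffEach (fun x => r * (dotp w x - e)) := by
  have hdot : ∀ (x : Fin n → ℝ) (k : Fin n) (s : ℝ),
      dotp w (Function.update x k s) = (∑ j ∈ {k}ᶜ, w j * x j) + w k * s := by
    intro x k s
    unfold dotp
    rw [Fintype.sum_eq_add_sum_compl k]
    simp only [Function.update_self]
    rw [add_comm]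
    congr 1
    refine Finset.sum_congr rfl fun j hj => ?_
    have hjk : j ≠ k := by simpa using hj
    rw [Function.update_of_ne hjk]
  intro x k u v θ
  simp only [hdot]
  ring

lemma key_lemma {n : ℕ} (lo hi : Fin n → ℝ) (hlt : ∀ k, lo k < hi k)
    (q : (Fin n → ℝ) → ℝ) (hq : AffEach q) (t : ℝ)
    (hv : ∀ v : Fin n → ℝ, (∀ k, v k = lo k ∨ v k = hi k) → t ≤ q v) :
    ∀ x : Fin n → ℝ, (∀ k, x k ∈ Set.Icc (lo k) (hi k)) → t ≤ q x := by
  suffices h : ∀ (m : ℕ) (x : Fin n → ℝ), (∀ k, x k ∈ Set.Icc (lo k) (hi k)) →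
      (Finset.univ.filter (fun k => ¬(x k = lo k ∨ x k = hi k))).card ≤ m → t ≤ q x by
    intro x hx
    exact h _ x hx le_rfl
  intro m
  induction m with
  | zero =>
    intro x hx hcard
    apply hv
    intro k
    by_contra hk
    have hkmem : k ∈ Finset.univ.filter (fun k => ¬(x k = lo k ∨ x k = hi k)) := by
      simp only [Finset.mem_filter, Finset.mem_univ, true_and]; tauto
    have := Finset.card_pos.mpr ⟨k, hkmem⟩
    omega
  | succ m ih =>
    intro x hx hcard
    by_cases hall : ∀ k, x k = lo k ∨ x k = hi k
    · exact hv x hall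
    · push_neg at hall
      obtain ⟨k, hk⟩ := hall
      have hne : hi k - lo k ≠ 0 := by have := hlt k; linarith
      set θ := (x k - lo k) / (hi k - lo k) with hθdef
      have hθ0 : 0 ≤ θ := by
        apply div_nonneg
        · have := (hx k).1; linarith
        · have := hlt k; linarith
      have hθ1 : θ ≤ 1 := by
        rw [div_le_one (by have := hlt k; linarith)]
        have := (hx k).2; linarith
      have hxk : x k = (1-θ)*lo k + θ*hi k := by
        have hmul : θ * (hi k - lo k) = x k - lo k := by
          rw [hθdef]; exact div_mul_cancel₀ _ hne
        linear_combination -hmul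
      have hxeq : x = Function.update x k ((1-θ)*lo k + θ*hi k) := by
        rw [← hxk, Function.update_eq_self]
      -- bad set bounds for the updated points
      have hsub : ∀ s : ℝ, (s = lo k ∨ s = hi k) →
          (Finset.univ.filter (fun j => ¬(Function.update x k s j = lo j ∨
            Function.update x k s j = hi j))).card ≤ m := by
        intro s hs
        have hsubset : (Finset.univ.filter (fun j => ¬(Function.update x k s j = lo j ∨
            Function.update x k s j = hi j))) ⊆
            (Finset.univ.filter (fun j => ¬(x j = lo j ∨ x j = hi j))).erase k := by
          intro j hj
          simp only [Finset.mem_filter, Finset.mem_univ, true_and] at hj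
          have hjk : j ≠ k := by
            intro h; subst h; rw [Function.update_self] at hj; exact hj hs
          rw [Function.update_of_ne hjk] at hj
          simp only [Finset.mem_erase, Finset.mem_filter, Finset.mem_univ, true_and]
          exact ⟨hjk, hj⟩
        calc _ ≤ ((Finset.univ.filter (fun j => ¬(x j = lo j ∨ x j = hi j))).erase k).card :=
              Finset.card_le_card hsubset
          _ ≤ (Finset.univ.filter (fun j => ¬(x j = lo j ∨ x j = hi j))).card - 1 :=
              le_of_eq (Finset.card_erase_of_mem (by
                simp only [Finset.mem_filter, Finset.mem_univ, true_and]; tauto))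
          _ ≤ m := by omega
      have h1 : t ≤ q (Function.update x k (lo k)) := by
        apply ih
        · intro j
          by_cases hjk : j = k
          · subst hjk; rw [Function.update_self]
            exact ⟨le_refl _, le_of_lt (hlt j)⟩
          · rw [Function.update_of_ne hjk]; exact hx j
        · exact hsub _ (Or.inl rfl)
      have h2 : t ≤ q (Function.update x k (hi k)) := by
        apply ih
        · intro j
          by_cases hjk : j = k
          · subst hjk; rw [Function.update_self]
            exact ⟨le_of_lt (hlt j), le_refl _⟩
          · rw [Function.update_of_ne hjk]; exact hx j
        · exact hsub _ (Or.inr rfl)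
      rw [hxeq, hq x k (lo k) (hi k) θ]
      nlinarith [h1, h2, hθ0, hθ1]

/-- Weak duality certificate for multi-affine objectives: if `t`, `λ ≥ 0`, `μ` satisfy
`t ≤ p v + ∑ᵢ λᵢ(aᵢ·v − bᵢ) + ∑ⱼ μⱼ(cⱼ·v − dⱼ)` at every vertex `v` of the rectangle
`R`, then `t ≤ p x` for every feasible `x` (every `x ∈ R` with `aᵢ·x ≤ bᵢ` and
`cⱼ·x = dⱼ`); in particular `t` is a lower bound on the optimal value of (P). -/
theorem stmt_7 {n mI mJ : ℕ} (lo hi : Fin n → ℝ) (hlt : ∀ k, lo k < hi k)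
    (p : (Fin n → ℝ) → ℝ) (hp : MultiAffine p)
    (a : Fin mI → Fin n → ℝ) (b : Fin mI → ℝ)
    (c : Fin mJ → Fin n → ℝ) (d : Fin mJ → ℝ)
    (t : ℝ) (lam : Fin mI → ℝ) (mu : Fin mJ → ℝ)
    (hlam : ∀ i, 0 ≤ lam i)
    (hcert : ∀ v : Fin n → ℝ, (∀ k, v k = lo k ∨ v k = hi k) →
      t ≤ p v + ∑ i, lam i * (dotp (a i) v - b i)
          + ∑ j, mu j * (dotp (c j) v - d j)) :
    ∀ x : Fin n → ℝ, (∀ k, x k ∈ Set.Icc (lo k) (hi k)) →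
      (∀ i, dotp (a i) x ≤ b i) → (∀ j, dotp (c j) x = d j) →
      t ≤ p x := by
  intro x hx hineq heq
  set L : (Fin n → ℝ) → ℝ := fun y => p y + ∑ i, lam i * (dotp (a i) y - b i)
      + ∑ j, mu j * (dotp (c j) y - d j) with hL
  have hLaff : AffEach L := by
    apply affEach_add
    apply affEach_add
    · exact multiAffine_affEach hp
    · exact affEach_sum _ _ (fun i _ => affEach_lin (lam i) (b i) (a i))
    · exact affEach_sum _ _ (fun j _ => affEach_lin (mu j) (d j) (c j))
  have hLx : t ≤ L x := key_lemma lo hi hlt L hLaff t hcert x hx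
  have h1 : ∑ i, lam i * (dotp (a i) x - b i) ≤ 0 :=
    Finset.sum_nonpos fun i _ =>
      mul_nonpos_of_nonneg_of_nonpos (hlam i) (by have := hineq i; linarith)
  have h2 : ∑ j, mu j * (dotp (c j) x - d j) = 0 :=
    Finset.sum_eq_zero fun j _ => by rw [heq j]; ring
  rw [hL] at hLx
  simp only at hLx
  linarith
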